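/- Let H=(V,E,w) be a directed hypergraph with vertex weights ω : V → ℝ>0, let ∅ ≠ S ⊊ V with 0 ∈ S, and let v_0 be a vector in a real inner product space with ‖v_0‖² = 1/(4·ω(S)·ω(V∖S)). Define v_i := v_0 for i ∈ S and v_i := −v_0 for i ∈ V∖S. Then: (a) Σ_{{i,j}∈(V choose 2)} ω_i ω_j ‖v_i − v_j‖² = 1; and (b) setting d_e := max{0, max_{(i,j)∈Tₑ×Hₑ} d(i,j)} for each e ∈ E, where d(i,j) := ‖v_i − v_j‖² − ‖v_i − v_0‖² + ‖v_j − v_0‖², one has (1/2)·Σ_{e∈E} w_e·d_e = θ(S) := w(∂⁺(S))/(ω(S)·ω(V∖S)). Hence the SDP is a relaxation of the directed sparsest cut problem with product demands. -/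

import Mathlib

open Finset

/-- The SDP is a relaxation of directed sparsest cut with product demands:
the integral solution induced by a cut `S` (with `v_i = v₀` for `i ∈ S`, `v_i = −v₀`
otherwise, `‖v₀‖² = 1/(4 ω(S) ω(V∖S))`) satisfies the normalization constraint (a) and has
SDP objective value exactly the directed sparsity `θ(S)` (b). -/
theorem sdp_relaxation_of_directed_sparsest_cut
    {V E : Type*} [Fintype V] [Fintype E] [DecidableEq V]
    {F : Type*} [NormedAddCommGroup F] [InnerProductSpace ℝ F]
    (Tl Hd : E → Finset V) (hTl : ∀ e, (Tl e).Nonempty) (hHd : ∀ e, (Hd e).Nonempty)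
    (w : E → ℝ) (hw : ∀ e, 0 ≤ w e)
    (ω : V → ℝ) (hω : ∀ u, 0 < ω u)
    (S : Finset V) (hS : S.Nonempty) (hS' : S ≠ Finset.univ)
    (z : V) (hz : z ∈ S)
    (v₀ : F) (hv₀ : ‖v₀‖ ^ 2 = 1 / (4 * (∑ u ∈ S, ω u) * (∑ u ∈ Sᶜ, ω u)))
    (v : V → F) (hv : ∀ i, v i = if i ∈ S then v₀ else -v₀)
    (d : V → V → ℝ)
    (hd : ∀ i j, d i j = ‖v i - v j‖ ^ 2 - ‖v i - v z‖ ^ 2 + ‖v j - v z‖ ^ 2) :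
    (1 / 2) * (∑ i, ∑ j, ω i * ω j * ‖v i - v j‖ ^ 2) = 1 ∧
    (1 / 2) * (∑ e, w e *
        max 0 (((Tl e) ×ˢ (Hd e)).sup' ((hTl e).product (hHd e)) (fun ij => d ij.1 ij.2)))
      = (∑ e ∈ univ.filter (fun e => (Tl e ∩ S).Nonempty ∧ (Hd e \ S).Nonempty), w e) /
          ((∑ u ∈ S, ω u) * (∑ u ∈ Sᶜ, ω u)) := by
  set a := ∑ u ∈ S, ω u with ha_def
  set b := ∑ u ∈ Sᶜ, ω u with hb_def
  have hScne : Sᶜ.Nonempty := by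
    rw [Finset.nonempty_iff_ne_empty]
    intro h
    exact hS' ((Finset.compl_eq_empty_iff S).mp h)
  have ha : 0 < a := Finset.sum_pos (fun u _ => hω u) hS
  have hb : 0 < b := Finset.sum_pos (fun u _ => hω u) hScne
  have ha' : a ≠ 0 := ha.ne'
  have hb' : b ≠ 0 := hb.ne'
  have hN0 : 0 ≤ ‖v₀‖ ^ 2 := sq_nonneg _
  have h4N : 4 * ‖v₀‖ ^ 2 * (a * b) = 1 := by
    rw [hv₀]; field_simp
  have h2 : ‖v₀ - -v₀‖ ^ 2 = 4 * ‖v₀‖ ^ 2 := by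
    have h : v₀ - -v₀ = (2:ℝ) • v₀ := by rw [two_smul]; abel
    rw [h, norm_smul, mul_pow]
    norm_num
  have h2' : ‖-v₀ - v₀‖ ^ 2 = 4 * ‖v₀‖ ^ 2 := by
    rw [show -v₀ - v₀ = -(v₀ - -v₀) by abel, norm_neg, h2]
  have hnorm : ∀ i j, ‖v i - v j‖ ^ 2 =
      if i ∈ S then (if j ∈ S then 0 else 4 * ‖v₀‖ ^ 2)
      else (if j ∈ S then 4 * ‖v₀‖ ^ 2 else 0) := by
    intro i j
    rw [hv i, hv j]
    by_cases hi : i ∈ S <;> by_cases hj : j ∈ S <;>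
      simp only [hi, hj, if_true, if_false, sub_self, norm_zero] <;>
      first
        | (rw [h2])
        | (rw [h2'])
        | (norm_num)
        | (rw [show -v₀ - -v₀ = (0:F) by abel, norm_zero]; norm_num)
  have hsplit : ∀ f : V → ℝ, ∑ j, f j = ∑ j ∈ S, f j + ∑ j ∈ Sᶜ, f j :=
    fun f => (Finset.sum_add_sum_compl S f).symm
  constructor
  · -- part (a)
    have hA : ∑ i, ∑ j, ω i * ω j * ‖v i - v j‖ ^ 2 = 2 := by
      rw [hsplit]
      have hin : ∀ i ∈ S, ∑ j, ω i * ω j * ‖v i - v j‖ ^ 2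
          = ω i * (4 * ‖v₀‖ ^ 2) * b := by
        intro i hi
        rw [hsplit]
        have e1 : ∑ j ∈ S, ω i * ω j * ‖v i - v j‖ ^ 2 = 0 :=
          Finset.sum_eq_zero fun j hj => by rw [hnorm i j, if_pos hi, if_pos hj]; ring
        have e2 : ∑ j ∈ Sᶜ, ω i * ω j * ‖v i - v j‖ ^ 2 = ω i * (4 * ‖v₀‖ ^ 2) * b := by
          rw [show ∑ j ∈ Sᶜ, ω i * ω j * ‖v i - v j‖ ^ 2
              = ∑ j ∈ Sᶜ, (ω i * (4 * ‖v₀‖ ^ 2)) * ω j from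
            Finset.sum_congr rfl fun j hj => by
              rw [hnorm i j, if_pos hi, if_neg (Finset.mem_compl.mp hj)]; ring]
          rw [← Finset.mul_sum]
        rw [e1, e2, zero_add]
      have hout : ∀ i ∈ Sᶜ, ∑ j, ω i * ω j * ‖v i - v j‖ ^ 2
          = ω i * (4 * ‖v₀‖ ^ 2) * a := by
        intro i hi
        have hi' : i ∉ S := Finset.mem_compl.mp hi
        rw [hsplit]
        have e1 : ∑ j ∈ S, ω i * ω j * ‖v i - v j‖ ^ 2 = ω i * (4 * ‖v₀‖ ^ 2) * a := by
          rw [show ∑ j ∈ S, ω i * ω j * ‖v i - v j‖ ^ 2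
              = ∑ j ∈ S, (ω i * (4 * ‖v₀‖ ^ 2)) * ω j from
            Finset.sum_congr rfl fun j hj => by
              rw [hnorm i j, if_neg hi', if_pos hj]; ring]
          rw [← Finset.mul_sum]
        have e2 : ∑ j ∈ Sᶜ, ω i * ω j * ‖v i - v j‖ ^ 2 = 0 :=
          Finset.sum_eq_zero fun j hj => by
            rw [hnorm i j, if_neg hi', if_neg (Finset.mem_compl.mp hj)]; ring
        rw [e1, e2, add_zero]
      rw [Finset.sum_congr rfl hin, Finset.sum_congr rfl hout,
        show ∑ i ∈ S, ω i * (4 * ‖v₀‖ ^ 2) * b = a * ((4 * ‖v₀‖ ^ 2) * b) by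
          rw [ha_def, Finset.sum_mul]; exact Finset.sum_congr rfl fun i _ => by ring,
        show ∑ i ∈ Sᶜ, ω i * (4 * ‖v₀‖ ^ 2) * a = b * ((4 * ‖v₀‖ ^ 2) * a) by
          rw [hb_def, Finset.sum_mul]; exact Finset.sum_congr rfl fun i _ => by ring]
      linear_combination 2 * h4N
    rw [hA]; norm_num
  · -- part (b)
    have hd' : ∀ i j, d i j = if i ∈ S then (if j ∈ S then 0 else 8 * ‖v₀‖ ^ 2)
        else 0 := by
      intro i j
      rw [hd, hnorm i j, hnorm i z, hnorm j z]
      by_cases hi : i ∈ S <;> by_cases hj : j ∈ S <;>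
        simp only [hi, hj, hz, if_true, if_false] <;> ring
    have hterm : ∀ e, max 0 (((Tl e) ×ˢ (Hd e)).sup' ((hTl e).product (hHd e))
          (fun ij => d ij.1 ij.2))
        = if (Tl e ∩ S).Nonempty ∧ (Hd e \ S).Nonempty then 8 * ‖v₀‖ ^ 2 else 0 := by
      intro e
      by_cases hP : (Tl e ∩ S).Nonempty ∧ (Hd e \ S).Nonempty
      · obtain ⟨⟨i, hi⟩, ⟨j, hj⟩⟩ := hP
        rw [Finset.mem_inter] at hi
        rw [Finset.mem_sdiff] at hj
        have hle : ((Tl e) ×ˢ (Hd e)).sup' ((hTl e).product (hHd e))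
            (fun ij => d ij.1 ij.2) ≤ 8 * ‖v₀‖ ^ 2 := by
          refine Finset.sup'_le _ _ fun ij _ => ?_
          rw [hd' ij.1 ij.2]
          split_ifs <;> linarith
        have hge : 8 * ‖v₀‖ ^ 2 ≤ ((Tl e) ×ˢ (Hd e)).sup' ((hTl e).product (hHd e))
            (fun ij => d ij.1 ij.2) := by
          have hmem : (i, j) ∈ (Tl e) ×ˢ (Hd e) :=
            Finset.mem_product.mpr ⟨hi.1, hj.1⟩
          have := Finset.le_sup' (fun ij : V × V => d ij.1 ij.2) hmem
          rwa [hd' i j, if_pos hi.2, if_neg hj.2] at this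
        rw [if_pos ⟨⟨i, Finset.mem_inter.mpr hi⟩, ⟨j, Finset.mem_sdiff.mpr hj⟩⟩,
          le_antisymm hle hge, max_eq_right (by linarith)]
      · have hzero : ∀ ij ∈ (Tl e) ×ˢ (Hd e),
            d ij.1 ij.2 = (fun _ : V × V => (0:ℝ)) ij := by
          intro ij hij
          rw [Finset.mem_product] at hij
          rw [hd' ij.1 ij.2]
          split_ifs with h1 h2
          · rfl
          · exact absurd ⟨⟨ij.1, Finset.mem_inter.mpr ⟨hij.1, h1⟩⟩,
              ⟨ij.2, Finset.mem_sdiff.mpr ⟨hij.2, h2⟩⟩⟩ hP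
          · rfl
        rw [if_neg hP, Finset.sup'_congr ((hTl e).product (hHd e)) rfl hzero,
          Finset.sup'_const]
        simp
    rw [Finset.sum_congr rfl fun e _ => by rw [hterm e]]
    rw [show ∑ e, w e * (if (Tl e ∩ S).Nonempty ∧ (Hd e \ S).Nonempty
            then 8 * ‖v₀‖ ^ 2 else 0)
        = ∑ e, (if (Tl e ∩ S).Nonempty ∧ (Hd e \ S).Nonempty
            then w e * (8 * ‖v₀‖ ^ 2) else 0) from
      Finset.sum_congr rfl fun e _ => by split_ifs <;> ring]
    rw [← Finset.sum_filter, ← Finset.sum_mul]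
    have habne : a * b ≠ 0 := by positivity
    rw [eq_div_iff habne]
    linear_combination
      (∑ e ∈ univ.filter (fun e => (Tl e ∩ S).Nonempty ∧ (Hd e \ S).Nonempty), w e) * h4N
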